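/- Let q, h, a : ℝ → E³ together with a differentiable conical curvature κ : ℝ → ℝ be a Frenet frame of a ruled surface, and suppose there is d ∈ ℝ with κ'(s) / (1 + κ(s)²)^{3/2} = d for all s. Define u(s) = (κ(s)/√(1 + κ(s)²))·q(s) + d·h(s) + (1/√(1 + κ(s)²))·a(s). Then u is a constant map (its derivative vanishes at every s), and ⟪h(s), u(s)⟫ = d for all s; in particular, if d ≠ 0 the surface is h-slant with axis u. -/

import Mathlib

open RealInnerProductSpace Matrix

noncomputable section

abbrev E3 := EuclideanSpace ℝ (Fin 3)

/-- A Frenet frame of a ruled surface: `q`, `h`, `a` are orthonormal at every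
parameter and satisfy the Frenet equations with conical curvature `κ`. -/
def IsFrenetFrame (q h a : ℝ → E3) (κ : ℝ → ℝ) : Prop :=
  (∀ s, ⟪q s, q s⟫ = 1 ∧ ⟪h s, h s⟫ = 1 ∧ ⟪a s, a s⟫ = 1 ∧
        ⟪q s, h s⟫ = 0 ∧ ⟪q s, a s⟫ = 0 ∧ ⟪h s, a s⟫ = 0) ∧
  (∀ s, HasDerivAt q (h s) s) ∧
  (∀ s, HasDerivAt h (-q s + κ s • a s) s) ∧
  (∀ s, HasDerivAt a (-(κ s • h s)) s)

/-- The Darboux vector of the frame. -/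
def darboux (q a : ℝ → E3) (κ : ℝ → ℝ) : ℝ → E3 := fun s => κ s • q s + a s

theorem const_implies_h_slant
    (q h a : ℝ → E3) (κ : ℝ → ℝ)
    (hframe : IsFrenetFrame q h a κ)
    (hκdiff : Differentiable ℝ κ)
    (d : ℝ) (hd : ∀ s, deriv κ s / (1 + κ s ^ 2) ^ ((3 : ℝ) / 2) = d)
    (u : ℝ → E3)
    (hu : ∀ s, u s = (κ s / Real.sqrt (1 + κ s ^ 2)) • q s + d • h s
        + (1 / Real.sqrt (1 + κ s ^ 2)) • a s) :
    (∀ s, HasDerivAt u 0 s) ∧ (∀ s, ⟪h s, u s⟫ = d) ∧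
    (d ≠ 0 → ∃ v : E3, v ≠ 0 ∧ (∀ s, u s = v) ∧ ∀ s, ⟪h s, v⟫ = d) := by
  obtain ⟨horth, hq, hh, ha⟩ := hframe
  have hu' : u = fun s => (κ s / Real.sqrt (1 + κ s ^ 2)) • q s + d • h s
      + (1 / Real.sqrt (1 + κ s ^ 2)) • a s := funext hu
  subst hu'
  have ht : ∀ s, (0 : ℝ) < 1 + κ s ^ 2 := fun s => by positivity
  have hw0 : ∀ s, Real.sqrt (1 + κ s ^ 2) ≠ 0 := fun s =>
    ne_of_gt (Real.sqrt_pos.2 (ht s))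
  have hwsq : ∀ s, Real.sqrt (1 + κ s ^ 2) ^ 2 = 1 + κ s ^ 2 := fun s =>
    Real.sq_sqrt (le_of_lt (ht s))
  have hκd : ∀ s, deriv κ s = d * Real.sqrt (1 + κ s ^ 2) ^ 3 := by
    intro s
    have h32 : (1 + κ s ^ 2) ^ ((3 : ℝ) / 2) = Real.sqrt (1 + κ s ^ 2) ^ 3 := by
      rw [Real.sqrt_eq_rpow, ← Real.rpow_natCast ((1 + κ s ^ 2) ^ ((1 : ℝ) / 2)) 3,
        ← Real.rpow_mul (le_of_lt (ht s))]
      norm_num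
    have := hd s
    rw [h32, div_eq_iff (by positivity)] at this
    linarith [this]
  have hsqrt : ∀ s, HasDerivAt (fun s => Real.sqrt (1 + κ s ^ 2))
      (κ s * deriv κ s / Real.sqrt (1 + κ s ^ 2)) s := by
    intro s
    have h1 : HasDerivAt (fun s => 1 + κ s ^ 2) (2 * κ s * deriv κ s) s := by
      have := ((hκdiff s).hasDerivAt.pow 2).const_add 1
      refine this.congr_deriv (Eq.symm ?_)
      push_cast
      ring
    have := (Real.hasDerivAt_sqrt (ne_of_gt (ht s))).comp s h1
    refine this.congr_deriv (Eq.symm ?_)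
    field_simp
  have hf : ∀ s, HasDerivAt (fun s => κ s / Real.sqrt (1 + κ s ^ 2)) d s := by
    intro s
    have := (hκdiff s).hasDerivAt.div (hsqrt s) (hw0 s)
    refine this.congr_deriv (Eq.symm ?_)
    rw [hκd s]
    field_simp
    linear_combination (-d) * hwsq s
  have hg : ∀ s, HasDerivAt (fun s => 1 / Real.sqrt (1 + κ s ^ 2)) (-(d * κ s)) s := by
    intro s
    have := (hsqrt s).inv (hw0 s)
    simp only [one_div]
    refine this.congr_deriv (Eq.symm ?_)
    rw [hκd s]
    field_simp
  have hus : ∀ s, HasDerivAt (fun s => (κ s / Real.sqrt (1 + κ s ^ 2)) • q s + d • h s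
      + (1 / Real.sqrt (1 + κ s ^ 2)) • a s) 0 s := by
    intro s
    have H := (((hf s).smul (hq s)).add ((hh s).const_smul d)).add
      ((hg s).smul (ha s))
    refine H.congr_deriv (Eq.symm ?_)
    have hfs : κ s / Real.sqrt (1 + κ s ^ 2)
        = κ s * (1 / Real.sqrt (1 + κ s ^ 2)) := by ring
    rw [hfs]
    module
  have hinner : ∀ s, ⟪h s, (κ s / Real.sqrt (1 + κ s ^ 2)) • q s + d • h s
      + (1 / Real.sqrt (1 + κ s ^ 2)) • a s⟫ = d := by
    intro s
    obtain ⟨h1, h2, h3, h4, h5, h6⟩ := horth s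
    simp only [inner_add_right, real_inner_smul_right]
    rw [real_inner_comm (q s) (h s), h4, h2, h6]
    ring
  have hconst : ∀ s, (κ s / Real.sqrt (1 + κ s ^ 2)) • q s + d • h s
      + (1 / Real.sqrt (1 + κ s ^ 2)) • a s
      = (κ 0 / Real.sqrt (1 + κ 0 ^ 2)) • q 0 + d • h 0
      + (1 / Real.sqrt (1 + κ 0 ^ 2)) • a 0 :=
    fun s => is_const_of_deriv_eq_zero
      (f := fun s => (κ s / Real.sqrt (1 + κ s ^ 2)) • q s + d • h s
        + (1 / Real.sqrt (1 + κ s ^ 2)) • a s)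
      (fun x => (hus x).differentiableAt) (fun x => (hus x).deriv) s 0
  refine ⟨hus, hinner, ?_⟩
  intro hd0
  refine ⟨(κ 0 / Real.sqrt (1 + κ 0 ^ 2)) • q 0 + d • h 0
      + (1 / Real.sqrt (1 + κ 0 ^ 2)) • a 0, ?_, hconst, ?_⟩
  · intro hv0
    have := hinner 0
    rw [hv0] at this
    simp at this
    exact hd0 this.symm
  · intro s
    rw [← hconst s]
    exact hinner s
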